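/- Let H, K₁, K₂, c be real constants with 1 + 12c > 0, and set B⁴(x₁,x₂) = (K₁ e^{(-1/6+√(1+12c)/6)x₁} + K₂ e^{(-1/6-√(1+12c)/6)x₁}) H e^{cx₂/2} and B³(x₁,x₂) = e^{x₁}(4/3 - 2e^{-x₂}∂₁B⁴(x₁,x₂)). Then the equation e^{-x₁}((3/2)∂₂B³ - (1/2)B³) + e^{-x₂}∂₂B⁴ - 4/3 = 0 fails to hold identically on ℝ²; i.e., there exist (x₁,x₂) where it is violated. -/

import Mathlib

open Real

/-- B⁴(x₁,x₂) = (K₁e^{(-1/6+√(1+12c)/6)x₁} + K₂e^{(-1/6-√(1+12c)/6)x₁})He^{cx₂/2}. -/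
noncomputable def B4 (H K₁ K₂ c x₁ x₂ : ℝ) : ℝ :=
  (K₁ * exp ((-1/6 + Real.sqrt (1 + 12 * c) / 6) * x₁)
    + K₂ * exp ((-1/6 - Real.sqrt (1 + 12 * c) / 6) * x₁)) * H * exp (c * x₂ / 2)

/-- B³(x₁,x₂) = e^{x₁}(4/3 - 2e^{-x₂}∂₁B⁴(x₁,x₂)). -/
noncomputable def B3 (H K₁ K₂ c x₁ x₂ : ℝ) : ℝ :=
  exp x₁ * (4/3 - 2 * exp (-x₂) * deriv (fun t => B4 H K₁ K₂ c t x₂) x₁)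

lemma expDerivAux (a x : ℝ) : HasDerivAt (fun t => exp (a * t)) (a * exp (a * x)) x := by
  simpa [mul_comm] using (((hasDerivAt_id x).const_mul a)).exp

lemma d1 (H K₁ K₂ c x₁ x₂ : ℝ) :
    deriv (fun t => B4 H K₁ K₂ c t x₂) x₁
      = (K₁ * (-1/6 + Real.sqrt (1 + 12 * c) / 6) * exp ((-1/6 + Real.sqrt (1 + 12 * c) / 6) * x₁)
        + K₂ * (-1/6 - Real.sqrt (1 + 12 * c) / 6) * exp ((-1/6 - Real.sqrt (1 + 12 * c) / 6) * x₁))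
        * H * exp (c * x₂ / 2) := by
  have h := ((((expDerivAux (-1/6 + Real.sqrt (1 + 12 * c) / 6) x₁).const_mul K₁).add
      ((expDerivAux (-1/6 - Real.sqrt (1 + 12 * c) / 6) x₁).const_mul K₂)).mul_const H).mul_const
      (exp (c * x₂ / 2))
  simp only [B4]
  simp only [Pi.add_apply] at h
  rw [h.deriv]; ring

lemma d2 (H K₁ K₂ c x₁ x₂ : ℝ) :
    deriv (fun t => B4 H K₁ K₂ c x₁ t) x₂
      = (K₁ * exp ((-1/6 + Real.sqrt (1 + 12 * c) / 6) * x₁)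
        + K₂ * exp ((-1/6 - Real.sqrt (1 + 12 * c) / 6) * x₁)) * H
        * (c/2 * exp (c * x₂ / 2)) := by
  have h0 : HasDerivAt (fun t : ℝ => c * t / 2) (c/2) x₂ := by
    simpa using ((hasDerivAt_id x₂).const_mul c).div_const 2
  have h := (h0.exp.const_mul
    ((K₁ * exp ((-1/6 + Real.sqrt (1 + 12 * c) / 6) * x₁)
        + K₂ * exp ((-1/6 - Real.sqrt (1 + 12 * c) / 6) * x₁)) * H))
  simp only [B4]
  rw [show (fun t => (K₁ * exp ((-1/6 + Real.sqrt (1 + 12 * c) / 6) * x₁)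
        + K₂ * exp ((-1/6 - Real.sqrt (1 + 12 * c) / 6) * x₁)) * H * exp (c * t / 2))
      = (fun t => (K₁ * exp ((-1/6 + Real.sqrt (1 + 12 * c) / 6) * x₁)
        + K₂ * exp ((-1/6 - Real.sqrt (1 + 12 * c) / 6) * x₁)) * H * exp (c * t / 2)) from rfl]
  rw [HasDerivAt.deriv (by simpa [mul_assoc] using h)]
  ring

/-- A(x₁) = ∂₁-coefficient. -/
noncomputable def Afun (K₁ K₂ c x₁ : ℝ) : ℝ :=
  K₁ * (-1/6 + Real.sqrt (1 + 12 * c) / 6) * exp ((-1/6 + Real.sqrt (1 + 12 * c) / 6) * x₁)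
    + K₂ * (-1/6 - Real.sqrt (1 + 12 * c) / 6) * exp ((-1/6 - Real.sqrt (1 + 12 * c) / 6) * x₁)

noncomputable def Sfun (K₁ K₂ c x₁ : ℝ) : ℝ :=
  K₁ * exp ((-1/6 + Real.sqrt (1 + 12 * c) / 6) * x₁)
    + K₂ * exp ((-1/6 - Real.sqrt (1 + 12 * c) / 6) * x₁)

lemma B3eq (H K₁ K₂ c x₁ : ℝ) :
    (fun t => B3 H K₁ K₂ c x₁ t)
      = fun t => exp x₁ * (4/3) - (2 * exp x₁ * Afun K₁ K₂ c x₁ * H) * exp ((c/2 - 1) * t) := by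
  funext t
  simp only [B3, d1, Afun]
  rw [show ((c/2 - 1) * t) = (-t + c * t / 2) by ring, Real.exp_add]
  ring

lemma d3 (H K₁ K₂ c x₁ x₂ : ℝ) :
    deriv (fun t => B3 H K₁ K₂ c x₁ t) x₂
      = -(2 * exp x₁ * Afun K₁ K₂ c x₁ * H) * ((c/2 - 1) * exp ((c/2 - 1) * x₂)) := by
  rw [B3eq]
  have h := ((expDerivAux (c/2 - 1) x₂).const_mul (2 * exp x₁ * Afun K₁ K₂ c x₁ * H)).const_sub
      (exp x₁ * (4/3))
  rw [h.deriv]; ring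


lemma B3pt (H K₁ K₂ c x₁ t : ℝ) :
    B3 H K₁ K₂ c x₁ t
      = exp x₁ * (4/3) - (2 * exp x₁ * Afun K₁ K₂ c x₁ * H) * exp ((c/2 - 1) * t) :=
  congrFun (B3eq H K₁ K₂ c x₁) t

lemma Ekey (H K₁ K₂ c x₁ x₂ : ℝ) :
    exp (-x₁) * ((3/2) * deriv (fun t => B3 H K₁ K₂ c x₁ t) x₂
          - (1/2) * B3 H K₁ K₂ c x₁ x₂)
        + exp (-x₂) * deriv (fun t => B4 H K₁ K₂ c x₁ t) x₂ - 4/3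
      = H * ((4 - 3*c/2) * Afun K₁ K₂ c x₁ + (c/2) * Sfun K₁ K₂ c x₁)
          * exp ((c/2 - 1) * x₂) - 2 := by
  rw [d3, d2, B3pt]
  rw [show exp (c * x₂ / 2) = exp x₂ * exp ((c/2 - 1) * x₂) by
    rw [← Real.exp_add]; ring_nf]
  simp only [Real.exp_neg, Sfun]
  field_simp
  ring

/-- The obstruction equation
e^{-x₁}((3/2)∂₂B³ - (1/2)B³) + e^{-x₂}∂₂B⁴ - 4/3 = 0
fails to hold identically on ℝ². -/
theorem obstruction_mu_zero (H K₁ K₂ c : ℝ) (hc : 1 + 12 * c > 0) :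
    ∃ x₁ x₂ : ℝ,
      exp (-x₁) * ((3/2) * deriv (fun t => B3 H K₁ K₂ c x₁ t) x₂
          - (1/2) * B3 H K₁ K₂ c x₁ x₂)
        + exp (-x₂) * deriv (fun t => B4 H K₁ K₂ c x₁ t) x₂ - 4/3 ≠ 0 := by
  by_cases h0 : H * ((4 - 3*c/2) * Afun K₁ K₂ c 0 + (c/2) * Sfun K₁ K₂ c 0) = 2
  · by_cases hc2 : c = 2
    · subst hc2
      have hs : Real.sqrt (1 + 12 * 2) = 5 := by
        rw [show (1 + 12 * 2 : ℝ) = 5 ^ 2 by norm_num, Real.sqrt_sq (by norm_num)]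
      refine ⟨1, 0, ?_⟩
      rw [Ekey]
      simp only [Afun, Sfun, hs, mul_zero, mul_one, Real.exp_zero] at h0 ⊢
      have he : Real.exp ((-1/6 + 5/6) * 1) > 1 := by
        rw [show ((-1/6 + 5/6 : ℝ) * 1) = 2/3 by norm_num]
        have := Real.add_one_lt_exp (x := (2/3 : ℝ)) (by norm_num)
        linarith
      have he2 : Real.exp ((-1/6 - 5/6) * 1) > 0 := Real.exp_pos _
      intro h
      nlinarith [h0, he, he2, h]
    · refine ⟨0, 1, ?_⟩
      rw [Ekey, h0]
      intro h
      have h1 : Real.exp ((c/2 - 1) * 1) = 1 := by linarith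
      rw [Real.exp_eq_one_iff] at h1
      apply hc2; linarith
  · refine ⟨0, 0, ?_⟩
    rw [Ekey]
    simp only [mul_zero, Real.exp_zero, mul_one]
    intro h
    exact h0 (by linarith)
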